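/- Let (Q^n)_{n≥1} be a time consistent family of coherent lower previsions on ℒ(𝒩^n). Let p : Σ_𝒳 → ℝ, let n₁, n₂ ≥ 1, and suppose b₁ ∈ ℒ(𝒩^{n₁}) and b₂ ∈ ℒ(𝒩^{n₂}) satisfy p(θ) = Σ_{m∈𝒩^{n₁}} b₁(m)B_m(θ) = Σ_{m∈𝒩^{n₂}} b₂(m)B_m(θ) for all θ ∈ Σ_𝒳. Then Q^{n₁}(b₁) = Q^{n₂}(b₂). -/

import Mathlib

open Finset Filter Topology

/-- A coherent lower prevision on the gambles over a finite nonempty space `Ω`. -/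
def LowerPrevCoherent {Ω : Type*} [Fintype Ω] [Nonempty Ω] (P : (Ω → ℝ) → ℝ) : Prop :=
  (∀ f : Ω → ℝ, sInf (Set.range f) ≤ P f) ∧
  (∀ (f : Ω → ℝ) (l : ℝ), 0 ≤ l → P (fun ω => l * f ω) = l * P f) ∧
  (∀ f g : Ω → ℝ, P f + P g ≤ P (f + g))

/-- A linear prevision on the gambles over a finite nonempty space `Ω`. -/
def LinearPrevision {Ω : Type*} [Fintype Ω] [Nonempty Ω] (P : (Ω → ℝ) → ℝ) : Prop :=
  (∀ f g : Ω → ℝ, P (f + g) = P f + P g) ∧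
  (∀ (l : ℝ) (f : Ω → ℝ), P (fun ω => l * f ω) = l * P f) ∧
  (∀ f : Ω → ℝ, (∀ ω, 0 ≤ f ω) → 0 ≤ P f) ∧
  P (fun _ => 1) = 1

/-- Exchangeability of a lower prevision on gambles on `X^N`:
`P (πf − f) ≥ 0` for every gamble `f` and every permutation `π`. -/
def Exchangeable {X : Type*} {N : ℕ} (P : ((Fin N → X) → ℝ) → ℝ) : Prop :=
  ∀ (f : (Fin N → X) → ℝ) (π : Equiv.Perm (Fin N)),
    0 ≤ P (fun x => f (fun k => x (π k)) - f x)

/-- The set of count vectors `𝒩^n`. -/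
abbrev CVec (X : Type*) [Fintype X] (n : ℕ) : Type _ := {m : X → ℕ // ∑ x, m x = n}

noncomputable instance {X : Type*} [Fintype X] [DecidableEq X] (n : ℕ) : Fintype (CVec X n) := by
  have key : ∀ (m : CVec X n) (x : X), m.1 x < n + 1 := by
    intro m x
    have h1 : m.1 x ≤ ∑ y, m.1 y :=
      Finset.single_le_sum (fun i _ => Nat.zero_le _) (Finset.mem_univ x)
    have h2 := m.2
    omega
  exact Fintype.ofInjective (fun m : CVec X n => fun x => (⟨m.1 x, key m x⟩ : Fin (n+1)))
    (fun a b hab => Subtype.ext (funext fun x => congrArg Fin.val (congrFun hab x)))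

instance {X : Type*} [Fintype X] [DecidableEq X] [Nonempty X] (n : ℕ) :
    Nonempty (CVec X n) :=
  ⟨⟨fun x => if x = Classical.arbitrary X then n else 0, by simp⟩⟩

/-- The counting map `T^n : X^n → 𝒩^n`. -/
def countMap {X : Type*} [Fintype X] [DecidableEq X] (n : ℕ) (z : Fin n → X) : CVec X n :=
  ⟨fun x => (Finset.univ.filter fun k => z k = x).card, by
    have h := Finset.card_eq_sum_card_fiberwise (f := z) (s := Finset.univ) (t := Finset.univ)
      (fun k _ => Finset.mem_univ (z k))
    simpa using h.symm⟩

/-- `ν(m) = n!/∏ₓ mₓ!` for a count vector `m ∈ 𝒩^n`. -/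
def nu {X : Type*} [Fintype X] {n : ℕ} (m : CVec X n) : ℕ :=
  Nat.multinomial Finset.univ m.1

/-- `ν(μ − m)`, which is `0` unless `m ≤ μ` componentwise. -/
def nuSub {X : Type*} [Fintype X] {n k : ℕ} (μ : CVec X (n + k)) (m : CVec X n) : ℕ :=
  if ∀ x, m.1 x ≤ μ.1 x then Nat.multinomial Finset.univ (fun x => μ.1 x - m.1 x) else 0

/-- The multiple hyper-geometric prevision `MuHy^n(f|m) = (1/ν(m)) ∑_{z∈[m]} f(z)`. -/
noncomputable def MuHy {X : Type*} [Fintype X] [DecidableEq X] {n : ℕ}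
    (f : (Fin n → X) → ℝ) (m : CVec X n) : ℝ :=
  (∑ z ∈ Finset.univ.filter fun z : Fin n → X => countMap n z = m, f z) / (nu m : ℝ)

/-- The `X`-simplex `Σ_X`, as a subtype of `X → ℝ`. -/
abbrev SimplexPt (X : Type*) [Fintype X] : Type _ :=
  {θ : X → ℝ // (∀ x, 0 ≤ θ x) ∧ ∑ x, θ x = 1}

/-- The Bernstein basis polynomial `B_m(θ) = ν(m) ∏ₓ θₓ^{mₓ}`. -/
noncomputable def Bern {X : Type*} [Fintype X] {n : ℕ} (m : CVec X n) (θ : X → ℝ) : ℝ :=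
  (nu m : ℝ) * ∏ x, θ x ^ m.1 x

/-- The count multinomial expectation `CoMn^n(g|θ) = ∑_m g(m) B_m(θ)`. -/
noncomputable def CoMn {X : Type*} [Fintype X] [DecidableEq X] {n : ℕ} (g : CVec X n → ℝ) (θ : X → ℝ) : ℝ :=
  ∑ m : CVec X n, g m * Bern m θ

/-- The multinomial expectation `Mn^n(f|θ) = ∑_z f(z) ∏ₓ θₓ^{Tₓ(z)}`. -/
noncomputable def Mn {X : Type*} [Fintype X] [DecidableEq X] {n : ℕ}
    (f : (Fin n → X) → ℝ) (θ : X → ℝ) : ℝ :=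
  ∑ z : Fin n → X, f z * ∏ x, θ x ^ (countMap n z).1 x

/-- `CoMn^n(g|·)` as a function on the simplex. -/
noncomputable def CoMnP {X : Type*} [Fintype X] [DecidableEq X] {n : ℕ} (g : CVec X n → ℝ)
    (θ : SimplexPt X) : ℝ :=
  CoMn g θ.1

/-- `Mn^n(f|·)` as a function on the simplex. -/
noncomputable def MnP {X : Type*} [Fintype X] [DecidableEq X] {n : ℕ}
    (f : (Fin n → X) → ℝ) (θ : SimplexPt X) : ℝ :=
  Mn f θ.1

/-- Polynomial gambles on the simplex: the set `𝒱(Σ_X)`. -/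
def IsPolyGamble {X : Type*} [Fintype X] [DecidableEq X] (p : SimplexPt X → ℝ) : Prop :=
  ∃ n : ℕ, 1 ≤ n ∧ ∃ g : CVec X n → ℝ, p = fun θ => CoMnP g θ

/-- Coherence of a functional on the linear space `𝒱(Σ_X)` of polynomial gambles. -/
def CoherentOnPoly {X : Type*} [Fintype X] [DecidableEq X] (S : (SimplexPt X → ℝ) → ℝ) : Prop :=
  (∀ p, IsPolyGamble p → sInf (Set.range p) ≤ S p) ∧
  (∀ p, IsPolyGamble p → ∀ l : ℝ, 0 ≤ l → S (fun θ => l * p θ) = l * S p) ∧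
  (∀ p q, IsPolyGamble p → IsPolyGamble q → S p + S q ≤ S (p + q))

/-- Cylindrical extension of a gamble on `X^n` to `X^{n+k}`. -/
def cylExt {X : Type*} {n k : ℕ} (f : (Fin n → X) → ℝ) : (Fin (n + k) → X) → ℝ :=
  fun z => f fun i => z (Fin.castLE (Nat.le_add_right n k) i)

/-- Time consistency of a family of lower previsions on the `X^n`. -/
def PTimeConsistent {X : Type*} (P : ∀ n : ℕ, ((Fin n → X) → ℝ) → ℝ) : Prop :=
  ∀ n : ℕ, 1 ≤ n → ∀ (k : ℕ) (f : (Fin n → X) → ℝ), P n f = P (n + k) (cylExt f)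

/-- Time consistency of a family of count lower previsions on the `𝒩^n`. -/
def QTimeConsistent {X : Type*} [Fintype X] [DecidableEq X] (Q : ∀ n : ℕ, (CVec X n → ℝ) → ℝ) : Prop :=
  ∀ n : ℕ, 1 ≤ n → ∀ (k : ℕ) (h : CVec X n → ℝ),
    Q n h = Q (n + k) (fun μ => ∑ m : CVec X n, ((nuSub μ m : ℝ) * (nu m : ℝ) / (nu μ : ℝ)) * h m)

/-- The relative frequency vector `m/n ∈ Σ_X` of a count vector `m ∈ 𝒩^n`, `n ≥ 1`. -/
noncomputable def freqPt {X : Type*} [Fintype X] {n : ℕ} (hn : 0 < n) (m : CVec X n) :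
    SimplexPt X :=
  ⟨fun x => (m.1 x : ℝ) / n,
   fun x => div_nonneg (Nat.cast_nonneg _) (Nat.cast_nonneg _),
   by
    rw [← Finset.sum_div]
    have h : (∑ x, (m.1 x : ℝ)) = (n : ℝ) := by exact_mod_cast m.2
    rw [h]
    exact div_self (Nat.cast_ne_zero.mpr hn.ne')⟩

/-- `ḡ(μ) = ∑_m (ν(m) ν(μ−m) / ν(μ)) g(m)`. -/
noncomputable def gbar {X : Type*} [Fintype X] [DecidableEq X] {n k : ℕ}
    (g : CVec X n → ℝ) (μ : CVec X (n + k)) : ℝ :=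
  ∑ m : CVec X n, ((nu m : ℝ) * (nuSub μ m : ℝ) / (nu μ : ℝ)) * g m



section Aux

/-- Base-`b` digit representations with digits `< b` are unique. -/
theorem digits_inj : ∀ (c : ℕ) {b : ℕ} (d d' : Fin c → ℕ), (∀ j, d j < b) → (∀ j, d' j < b) →
    ∑ j, d j * b ^ (j : ℕ) = ∑ j, d' j * b ^ (j : ℕ) → d = d' := by
  intro c
  induction c with
  | zero => intro b d d' _ _ _; funext j; exact j.elim0
  | succ c ih =>
    intro b d d' hd hd' hsum
    have hb : 0 < b := lt_of_le_of_lt (Nat.zero_le _) (hd 0)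
    rw [Fin.sum_univ_succ, Fin.sum_univ_succ] at hsum
    have hrw : ∀ e : Fin (c+1) → ℕ,
        (∑ j : Fin c, e j.succ * b ^ ((j.succ : Fin (c+1)) : ℕ))
          = (∑ j : Fin c, e j.succ * b ^ (j : ℕ)) * b := by
      intro e
      rw [Finset.sum_mul]
      refine Finset.sum_congr rfl fun j _ => ?_
      rw [Fin.val_succ, pow_succ, mul_assoc]
    rw [hrw d, hrw d'] at hsum
    simp only [Fin.val_zero, pow_zero, mul_one] at hsum
    set t := ∑ j : Fin c, d j.succ * b ^ (j : ℕ) with ht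
    set t' := ∑ j : Fin c, d' j.succ * b ^ (j : ℕ) with ht'
    have h0 : d 0 = d' 0 := by
      have e1 : (d 0 + t * b) % b = d 0 := by
        rw [Nat.add_mul_mod_self_right]; exact Nat.mod_eq_of_lt (hd 0)
      have e2 : (d' 0 + t' * b) % b = d' 0 := by
        rw [Nat.add_mul_mod_self_right]; exact Nat.mod_eq_of_lt (hd' 0)
      rw [← e1, ← e2, hsum]
    have htt : t = t' := by
      have : t * b = t' * b := by omega
      exact Nat.eq_of_mul_eq_mul_right hb this
    have := ih (fun j => d j.succ) (fun j => d' j.succ)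
      (fun j => hd j.succ) (fun j => hd' j.succ) (by rw [← ht, ← ht', htt])
    funext j
    refine Fin.cases h0 (fun i => ?_) j
    exact congrFun this i

variable {X : Type*} [Fintype X] [DecidableEq X] [Nonempty X]

/-- The exponent encoding of a count vector. -/
noncomputable def enc {N : ℕ} (μ : CVec X N) : ℕ :=
  ∑ x, μ.1 x * (N + 1) ^ ((Fintype.equivFin X x : ℕ))

theorem cvec_le {N : ℕ} (μ : CVec X N) (x : X) : μ.1 x ≤ N := by
  have h1 : μ.1 x ≤ ∑ y, μ.1 y :=
    Finset.single_le_sum (fun i _ => Nat.zero_le _) (Finset.mem_univ x)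
  rw [μ.2] at h1; exact h1

theorem enc_inj {N : ℕ} : Function.Injective (enc (X := X) (N := N)) := by
  intro μ μ' h
  set eqv := Fintype.equivFin X with heqv
  have key : ∀ ν : CVec X N,
      enc ν = ∑ j : Fin (Fintype.card X), ν.1 (eqv.symm j) * (N + 1) ^ (j : ℕ) := by
    intro ν
    rw [enc, ← Equiv.sum_comp eqv.symm (fun x => ν.1 x * (N + 1) ^ ((eqv x : ℕ)))]
    simp
  rw [key, key] at h
  have := digits_inj (Fintype.card X)
    (fun j => μ.1 (eqv.symm j)) (fun j => μ'.1 (eqv.symm j))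
    (fun j => Nat.lt_succ_of_le (cvec_le μ _)) (fun j => Nat.lt_succ_of_le (cvec_le μ' _)) h
  apply Subtype.ext; funext x
  have := congrFun this (eqv x)
  simpa using this

/-- Linear independence of monomials over the simplex. -/
theorem simplex_indep {N : ℕ} (d : CVec X N → ℝ)
    (h : ∀ θ : SimplexPt X, ∑ μ : CVec X N, d μ * ∏ x, θ.1 x ^ μ.1 x = 0) :
    ∀ μ, d μ = 0 := by
  intro μ₀
  set w : X → ℕ := fun x => (N + 1) ^ ((Fintype.equivFin X x : ℕ)) with hw
  set P : Polynomial ℝ := ∑ μ : CVec X N, Polynomial.C (d μ) * Polynomial.X ^ (enc μ) with hP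
  have heval : ∀ s : ℝ, 0 < s → P.eval s = 0 := by
    intro s hs
    have hSpos : 0 < ∑ x, s ^ (w x) :=
      Finset.sum_pos (fun x _ => pow_pos hs _) Finset.univ_nonempty
    set S : ℝ := ∑ x, s ^ (w x) with hS
    set θ : SimplexPt X := ⟨fun x => s ^ (w x) / S,
      fun x => div_nonneg (pow_pos hs _).le hSpos.le, by
        rw [← Finset.sum_div]; exact div_self hSpos.ne'⟩ with hθ
    have h1 := h θ
    have h2 : ∀ μ : CVec X N, ∏ x, θ.1 x ^ μ.1 x = s ^ (enc μ) / S ^ N := by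
      intro μ
      have : ∏ x, θ.1 x ^ μ.1 x = (∏ x, (s ^ (w x)) ^ μ.1 x) / ∏ x, S ^ μ.1 x := by
        rw [← Finset.prod_div_distrib]
        exact Finset.prod_congr rfl fun x _ => by rw [div_pow]
      rw [this]
      congr 1
      · calc ∏ x, (s ^ w x) ^ μ.1 x = ∏ x, s ^ (μ.1 x * w x) :=
              Finset.prod_congr rfl fun x _ => by rw [← pow_mul, mul_comm]
          _ = s ^ (∑ x, μ.1 x * w x) := Finset.prod_pow_eq_pow_sum _ _ _
          _ = s ^ enc μ := rfl
      · rw [Finset.prod_pow_eq_pow_sum, μ.2]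
    have h3 : (∑ μ : CVec X N, d μ * s ^ (enc μ)) / S ^ N = 0 := by
      rw [Finset.sum_div, ← h1]
      exact Finset.sum_congr rfl fun μ _ => by rw [h2 μ, mul_div_assoc]
    have hSN : S ^ N ≠ 0 := pow_ne_zero _ hSpos.ne'
    have h4 : (∑ μ : CVec X N, d μ * s ^ (enc μ)) = 0 := by
      field_simp at h3; simpa using h3
    rw [hP, Polynomial.eval_finset_sum]
    simp only [Polynomial.eval_mul, Polynomial.eval_C, Polynomial.eval_pow, Polynomial.eval_X]
    exact h4
  have hP0 : P = 0 := by
    apply Polynomial.eq_zero_of_infinite_isRoot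
    apply Set.Infinite.mono (s := Set.Ioi (0:ℝ))
    · intro s hs; exact heval s hs
    · exact Set.Ioi_infinite 0
  have := congrArg (fun q => Polynomial.coeff q (enc μ₀)) hP0
  simp only [hP, Polynomial.finset_sum_coeff, Polynomial.coeff_C_mul,
    Polynomial.coeff_X_pow, Polynomial.coeff_zero] at this
  rw [Finset.sum_eq_single μ₀] at this
  · simpa using this
  · intro μ _ hne
    rw [if_neg (fun he => hne (enc_inj he.symm)), mul_zero]
  · intro habs; exact absurd (Finset.mem_univ _) habs

theorem nu_pos {n : ℕ} (m : CVec X n) : 0 < nu m := Nat.multinomial_pos _ _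

/-- The multinomial theorem for count vectors. -/
theorem cvec_multinomial (k : ℕ) (θ : X → ℝ) :
    ∑ m : CVec X k, (nu m : ℝ) * ∏ x, θ x ^ m.1 x = (∑ x, θ x) ^ k := by
  rw [Finset.sum_pow_eq_sum_piAntidiag Finset.univ θ k]
  rw [Finset.sum_subtype (p := fun f : X → ℕ => ∑ x, f x = k)]
  · rfl
  · intro f
    simp [Finset.mem_piAntidiag]

/-- Degree raising preserves the polynomial. -/
theorem gbar_CoMnP {n k : ℕ} (g : CVec X n → ℝ) (θ : SimplexPt X) :
    CoMnP (gbar (k := k) g) θ = CoMnP g θ := by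
  unfold CoMnP CoMn gbar Bern
  have step1 : ∀ μ : CVec X (n+k),
      (∑ m : CVec X n, ((nu m : ℝ) * (nuSub μ m : ℝ) / (nu μ : ℝ)) * g m) *
        ((nu μ : ℝ) * ∏ x, θ.1 x ^ μ.1 x)
      = ∑ m : CVec X n, ((nu m : ℝ) * g m) * ((nuSub μ m : ℝ) * ∏ x, θ.1 x ^ μ.1 x) := by
    intro μ
    rw [Finset.sum_mul]
    refine Finset.sum_congr rfl fun m _ => ?_
    have hν : (nu μ : ℝ) ≠ 0 := Nat.cast_ne_zero.mpr (nu_pos μ).ne'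
    field_simp
  rw [Finset.sum_congr rfl (fun μ _ => step1 μ), Finset.sum_comm]
  refine Finset.sum_congr rfl fun m _ => ?_
  rw [← Finset.mul_sum]
  have inner : ∑ μ : CVec X (n+k), (nuSub μ m : ℝ) * ∏ x, θ.1 x ^ μ.1 x
      = ∏ x, θ.1 x ^ m.1 x := by
    rw [← Finset.sum_filter_of_ne (p := fun μ : CVec X (n+k) => ∀ x, m.1 x ≤ μ.1 x)
      (by
        intro μ _ hne
        by_contra hle
        exact hne (by rw [nuSub, if_neg hle, Nat.cast_zero, zero_mul]))]
    have hip : ∀ μ : CVec X (n+k), (∀ x, m.1 x ≤ μ.1 x) →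
        ∑ x, (μ.1 x - m.1 x) = k := by
      intro μ hμ
      have hsum : (∑ x, (μ.1 x - m.1 x)) + ∑ x, m.1 x = ∑ x, μ.1 x := by
        rw [← Finset.sum_add_distrib]
        exact Finset.sum_congr rfl fun x _ => Nat.sub_add_cancel (hμ x)
      have hh1 := μ.2; have hh2 := m.2
      omega
    have hjp : ∀ lam : CVec X k, ∑ x, (m.1 x + lam.1 x) = n + k := by
      intro lam
      rw [Finset.sum_add_distrib, m.2, lam.2]
    have hbij : ∑ μ ∈ (Finset.univ.filter fun μ : CVec X (n+k) => ∀ x, m.1 x ≤ μ.1 x),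
        (nuSub μ m : ℝ) * ∏ x, θ.1 x ^ μ.1 x
        = ∑ lam : CVec X k, (nu lam : ℝ) *
            ((∏ x, θ.1 x ^ m.1 x) * ∏ x, θ.1 x ^ lam.1 x) := by
      refine Finset.sum_bij'
        (i := fun μ hμ => (⟨fun x => μ.1 x - m.1 x, hip μ (by
          simpa using (Finset.mem_filter.mp hμ).2)⟩ : CVec X k))
        (j := fun lam _ => (⟨fun x => m.1 x + lam.1 x, hjp lam⟩ : CVec X (n+k)))
        (hi := fun a ha => Finset.mem_univ _)
        (hj := fun a ha => by
          simp only [Finset.mem_filter, Finset.mem_univ, true_and]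
          intro x; exact Nat.le_add_right _ _)
        (fun a ha => by
          have ha' := (Finset.mem_filter.mp ha).2
          apply Subtype.ext; funext x
          exact Nat.add_sub_cancel' (ha' x))
        (fun a ha => by
          apply Subtype.ext; funext x
          exact Nat.add_sub_cancel_left _ _)
        (fun μ hμ => ?_)
      have hμ' := (Finset.mem_filter.mp hμ).2
      show (nuSub μ m : ℝ) * ∏ x, θ.1 x ^ μ.1 x
        = ((Nat.multinomial Finset.univ fun x => μ.1 x - m.1 x : ℕ) : ℝ) *
          ((∏ x, θ.1 x ^ m.1 x) * ∏ x, θ.1 x ^ (μ.1 x - m.1 x))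
      rw [nuSub, if_pos hμ', ← Finset.prod_mul_distrib]
      congr 1
      refine Finset.prod_congr rfl fun x _ => ?_
      rw [← pow_add, Nat.add_sub_cancel' (hμ' x)]
    rw [hbij]
    have hcomm : ∀ lam : CVec X k,
        (nu lam : ℝ) * ((∏ x, θ.1 x ^ m.1 x) * ∏ x, θ.1 x ^ lam.1 x)
        = (∏ x, θ.1 x ^ m.1 x) * ((nu lam : ℝ) * ∏ x, θ.1 x ^ lam.1 x) := fun lam => by ring
    rw [Finset.sum_congr rfl fun lam _ => hcomm lam, ← Finset.mul_sum,
      cvec_multinomial (X := X) k θ.1, θ.2.2, one_pow, mul_one]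
  rw [inner]
  ring

theorem cvec_eq_of_CoMnP {N : ℕ} (F G : CVec X N → ℝ)
    (h : ∀ θ : SimplexPt X, CoMnP F θ = CoMnP G θ) : F = G := by
  have key := simplex_indep (fun μ => (F μ - G μ) * (nu μ : ℝ)) ?_
  · funext μ
    have h1 := key μ
    have h2 : (nu μ : ℝ) ≠ 0 := Nat.cast_ne_zero.mpr (nu_pos μ).ne'
    have := mul_eq_zero.mp h1
    rcases this with h3 | h3
    · linarith [sub_eq_zero.mp h3]
    · exact absurd h3 h2
  · intro θ
    have := h θ
    unfold CoMnP CoMn Bern at this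
    have expand : ∑ μ : CVec X N, ((F μ - G μ) * (nu μ : ℝ)) * ∏ x, θ.1 x ^ μ.1 x
        = (∑ μ : CVec X N, F μ * ((nu μ : ℝ) * ∏ x, θ.1 x ^ μ.1 x))
          - ∑ μ : CVec X N, G μ * ((nu μ : ℝ) * ∏ x, θ.1 x ^ μ.1 x) := by
      rw [← Finset.sum_sub_distrib]
      exact Finset.sum_congr rfl fun μ _ => by ring
    rw [expand, this, sub_self]

theorem Qcast (Q : ∀ n : ℕ, (CVec X n → ℝ) → ℝ) {a b : ℕ} (hab : a = b)
    (F : CVec X a → ℝ) (G : CVec X b → ℝ)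
    (h : ∀ θ : SimplexPt X, CoMnP F θ = CoMnP G θ) : Q a F = Q b G := by
  subst hab
  rw [cvec_eq_of_CoMnP F G h]

end Aux

/-- for a time consistent family of coherent count lower previsions, the value
assigned to Bernstein coefficient gambles of a common polynomial is independent of the
degree of the representation. -/
theorem stmt9 {X : Type*} [Fintype X] [DecidableEq X] [Nonempty X]
    (Q : ∀ n : ℕ, (CVec X n → ℝ) → ℝ)
    (hcoh : ∀ n : ℕ, 1 ≤ n → LowerPrevCoherent (Q n))
    (htc : QTimeConsistent Q)
    (p : SimplexPt X → ℝ) {n₁ n₂ : ℕ} (h₁ : 1 ≤ n₁) (h₂ : 1 ≤ n₂)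
    (b₁ : CVec X n₁ → ℝ) (b₂ : CVec X n₂ → ℝ)
    (hb₁ : ∀ θ : SimplexPt X, p θ = CoMnP b₁ θ)
    (hb₂ : ∀ θ : SimplexPt X, p θ = CoMnP b₂ θ) :
    Q n₁ b₁ = Q n₂ b₂ := by
  have e1 : Q n₁ b₁ = Q (n₁ + n₂) (gbar b₁) := by
    rw [htc n₁ h₁ n₂ b₁]
    congr 1
    funext μ
    unfold gbar
    exact Finset.sum_congr rfl fun m _ => by ring
  have e2 : Q n₂ b₂ = Q (n₂ + n₁) (gbar b₂) := by
    rw [htc n₂ h₂ n₁ b₂]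
    congr 1
    funext μ
    unfold gbar
    exact Finset.sum_congr rfl fun m _ => by ring
  have e3 : Q (n₁ + n₂) (gbar b₁) = Q (n₂ + n₁) (gbar b₂) :=
    Qcast Q (Nat.add_comm n₁ n₂) _ _
      (fun θ => by rw [gbar_CoMnP, gbar_CoMnP, ← hb₁ θ, ← hb₂ θ])
  rw [e1, e3, ← e2]
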